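/- arXiv:0902.4645 — 3 statements merged into one kernel-verified Lean document; each statement's English description precedes it below -/
import Mathlib

section
/- Let (X, m) be a probability space, φ nondecreasing with φ(x)=1 for x≤1. Suppose E_n ⊆ X are disjoint measurable sets with m(E_n) ≥ e^{-2(n+1)} for n in an index set I ⊆ ℕ, and g ≥ 1 is measurable with e^n ≤ g < e^{n+1} on E_n. Then ∑_{n ∈ I} e^{n+1} φ(e^n) m(E_n)^{n/(n+1)} ≤ e³ ∫_X g φ(g) dm. -/
open MeasureTheory

theorem stmt2 {X : Type*} [MeasurableSpace X] (m : Measure X) [IsProbabilityMeasure m]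
    (φ : ℝ → ℝ) (hφmono : Monotone φ) (hφ1 : ∀ x : ℝ, x ≤ 1 → φ x = 1)
    (I : Set ℕ) (E : ℕ → Set X) (hmeas : ∀ n, MeasurableSet (E n))
    (hdisj : Pairwise (Function.onFun Disjoint E))
    (hbig : ∀ n ∈ I, ENNReal.ofReal (Real.exp (-2 * (n + 1))) ≤ m (E n))
    (g : X → ℝ) (hgmeas : Measurable g) (hg1 : ∀ x, 1 ≤ g x)
    (hgE : ∀ n : ℕ, ∀ x ∈ E n, Real.exp n ≤ g x ∧ g x < Real.exp (n + 1)) :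
    ∑' n : I, ENNReal.ofReal (Real.exp ((n : ℕ) + 1) * φ (Real.exp (n : ℕ))) *
        m (E n) ^ ((((n : ℕ) : ℝ)) / (((n : ℕ) : ℝ) + 1)) ≤
      ENNReal.ofReal (Real.exp 3) * ∫⁻ x, ENNReal.ofReal (g x * φ (g x)) ∂m := by
  have hφpos : ∀ t : ℝ, 1 ≤ t → 1 ≤ φ t := by
    intro t ht
    have := hφmono ht
    rwa [hφ1 1 le_rfl] at this
  have hfmeas : Measurable fun x => ENNReal.ofReal (g x * φ (g x)) :=
    (hgmeas.mul (hφmono.measurable.comp hgmeas)).ennreal_ofReal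
  -- per-term bound
  have key : ∀ n : ℕ, n ∈ I →
      ENNReal.ofReal (Real.exp (n + 1) * φ (Real.exp n)) *
        m (E n) ^ (((n : ℝ)) / ((n : ℝ) + 1)) ≤
      ENNReal.ofReal (Real.exp 3) *
        (ENNReal.ofReal (Real.exp n * φ (Real.exp n)) * m (E n)) := by
    intro n hn
    set a := m (E n) with ha
    have hexpn1 : (1 : ℝ) ≤ Real.exp n := Real.one_le_exp (Nat.cast_nonneg n)
    have hφn : (1 : ℝ) ≤ φ (Real.exp n) := hφpos _ hexpn1
    have ha0 : a ≠ 0 := by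
      intro h
      have := hbig n hn
      rw [← ha, h, le_zero_iff, ENNReal.ofReal_eq_zero] at this
      exact absurd this (not_le.mpr (Real.exp_pos _))
    have hatop : a ≠ ⊤ := (lt_of_le_of_lt (prob_le_one) ENNReal.one_lt_top).ne
    have hn1 : ((n : ℝ) + 1) ≠ 0 := by positivity
    -- rpow bound : a ^ (n/(n+1)) ≤ e^2 * a
    have hrpow : a ^ (((n : ℝ)) / ((n : ℝ) + 1)) ≤ ENNReal.ofReal (Real.exp 2) * a := by
      have hsplit : a = a ^ (((n : ℝ)) / ((n : ℝ) + 1)) * a ^ ((1 : ℝ) / ((n : ℝ) + 1)) := by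
        rw [← ENNReal.rpow_add _ _ ha0 hatop]
        rw [← add_div, div_self hn1, ENNReal.rpow_one]
      have hlow : ENNReal.ofReal (Real.exp (-2)) ≤ a ^ ((1 : ℝ) / ((n : ℝ) + 1)) := by
        have h1 : ENNReal.ofReal (Real.exp (-2 * (n + 1))) ^ ((1 : ℝ) / ((n : ℝ) + 1))
            ≤ a ^ ((1 : ℝ) / ((n : ℝ) + 1)) :=
          ENNReal.rpow_le_rpow (hbig n hn) (by positivity)
        have h2 : ENNReal.ofReal (Real.exp (-2 * (n + 1))) ^ ((1 : ℝ) / ((n : ℝ) + 1))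
            = ENNReal.ofReal (Real.exp (-2)) := by
          rw [ENNReal.ofReal_rpow_of_pos (Real.exp_pos _), ← Real.exp_mul]
          congr 1
          field_simp
        rwa [h2] at h1
      calc a ^ (((n : ℝ)) / ((n : ℝ) + 1))
          = ENNReal.ofReal (Real.exp 2) * (ENNReal.ofReal (Real.exp (-2)) *
              a ^ (((n : ℝ)) / ((n : ℝ) + 1))) := by
            rw [← mul_assoc, ← ENNReal.ofReal_mul (Real.exp_pos _).le, ← Real.exp_add]
            norm_num
        _ ≤ ENNReal.ofReal (Real.exp 2) * (a ^ ((1 : ℝ) / ((n : ℝ) + 1)) *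
              a ^ (((n : ℝ)) / ((n : ℝ) + 1))) := by
            gcongr
        _ = ENNReal.ofReal (Real.exp 2) * a := by
            rw [mul_comm (a ^ ((1 : ℝ) / ((n : ℝ) + 1)))]
            rw [← hsplit]
    have heq : ENNReal.ofReal (Real.exp 3) * (ENNReal.ofReal (Real.exp n * φ (Real.exp n)) * a)
        = ENNReal.ofReal (Real.exp (n + 1) * φ (Real.exp n)) *
            (ENNReal.ofReal (Real.exp 2) * a) := by
      rw [← mul_assoc, ← mul_assoc, ← ENNReal.ofReal_mul (Real.exp_pos _).le,
        ← ENNReal.ofReal_mul (by positivity)]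
      congr 2
      have hx : Real.exp 3 * Real.exp (n : ℝ) = Real.exp ((n : ℝ) + 1) * Real.exp 2 := by
        rw [← Real.exp_add, ← Real.exp_add]; ring_nf
      linear_combination φ (Real.exp (n : ℝ)) * hx
    rw [heq]
    exact mul_le_mul_right hrpow _
  -- lower bound on the integral
  have hdisj' : Pairwise (Function.onFun Disjoint fun n : I => E n) :=
    fun i j hij => hdisj (Subtype.coe_injective.ne hij)
  have hint : ∑' n : I, ENNReal.ofReal (Real.exp (n : ℕ) * φ (Real.exp (n : ℕ))) * m (E n)
      ≤ ∫⁻ x, ENNReal.ofReal (g x * φ (g x)) ∂m := by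
    have h1 : ∀ n : ℕ, ENNReal.ofReal (Real.exp n * φ (Real.exp n)) * m (E n)
        ≤ ∫⁻ x in E n, ENNReal.ofReal (g x * φ (g x)) ∂m := by
      intro n
      rw [← setLIntegral_const (E n) (ENNReal.ofReal (Real.exp n * φ (Real.exp n)))]
      refine setLIntegral_mono hfmeas ?_
      intro x hx
      apply ENNReal.ofReal_le_ofReal
      have h1 := (hgE n x hx).1
      have hexpn1 : (1 : ℝ) ≤ Real.exp n := Real.one_le_exp (Nat.cast_nonneg n)
      have := hφmono h1
      nlinarith [hφpos _ hexpn1, Real.exp_pos (n : ℝ)]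
    calc ∑' n : I, ENNReal.ofReal (Real.exp (n : ℕ) * φ (Real.exp (n : ℕ))) * m (E n)
        ≤ ∑' n : I, ∫⁻ x in E (n : ℕ), ENNReal.ofReal (g x * φ (g x)) ∂m :=
          ENNReal.tsum_le_tsum fun n => h1 n
      _ = ∫⁻ x in ⋃ n : I, E n, ENNReal.ofReal (g x * φ (g x)) ∂m :=
          (lintegral_iUnion (fun n : I => hmeas n) hdisj' _).symm
      _ ≤ ∫⁻ x, ENNReal.ofReal (g x * φ (g x)) ∂m := setLIntegral_le_lintegral _ _
  calc ∑' n : I, ENNReal.ofReal (Real.exp ((n : ℕ) + 1) * φ (Real.exp (n : ℕ))) *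
        m (E n) ^ ((((n : ℕ) : ℝ)) / (((n : ℕ) : ℝ) + 1))
      ≤ ∑' n : I, ENNReal.ofReal (Real.exp 3) *
          (ENNReal.ofReal (Real.exp (n : ℕ) * φ (Real.exp (n : ℕ))) * m (E n)) :=
        ENNReal.tsum_le_tsum fun n => key n n.2
    _ = ENNReal.ofReal (Real.exp 3) *
          ∑' n : I, ENNReal.ofReal (Real.exp (n : ℕ) * φ (Real.exp (n : ℕ))) * m (E n) :=
        ENNReal.tsum_mul_left
    _ ≤ ENNReal.ofReal (Real.exp 3) * ∫⁻ x, ENNReal.ofReal (g x * φ (g x)) ∂m :=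
        mul_le_mul_right hint _
end

section
/- Let S ⊆ ℕ be strictly increasing and Δ ⊇ S be obtained by adding, for each k, a set of new elements inside intervals [n_k, 2n_k) with n_{k} > 2n_{k-1}, such that the number of elements added in [n_k, 2n_k) is at most R(u_k)|S(n_k)| where R is decreasing to 0, u_k → ∞ as k → ∞, and R(u_k)|S(n_k)| > ∑_{j=1}^{k-1}|S(n_j)|. Then for n_k ≤ n < n_{k+1}, |Δ(n) \ S| ≤ 2R(u_k)|S(n_k)|, and consequently |Δ(n) \ S|/|S(n)| → 0, i.e. Δ is a perturbation of S. -/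
lemma ncard_biUnion_range_le (f : ℕ → Set ℕ) (hf : ∀ j, (f j).Finite) (m : ℕ) :
    (⋃ j ∈ Finset.range m, f j).ncard ≤ ∑ j ∈ Finset.range m, (f j).ncard := by
  induction m with
  | zero => simp
  | succ m ih =>
    rw [Finset.sum_range_succ, Finset.range_add_one]
    have he : (⋃ j ∈ insert m (Finset.range m), f j) =
        (⋃ j ∈ Finset.range m, f j) ∪ f m := by
      simp [Set.biUnion_insert, Set.union_comm]
    rw [he]
    exact le_trans (Set.ncard_union_le _ _) (add_le_add_left ih _)

theorem stmt7 (S Δ : Set ℕ) (hSΔ : S ⊆ Δ)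
    (n : ℕ → ℕ) (hn0 : 0 < n 0) (hn : ∀ k, 2 * n k < n (k + 1))
    (u : ℕ → ℕ) (hu : Filter.Tendsto u Filter.atTop Filter.atTop)
    (R : ℕ → ℝ) (hR : Antitone R) (hRpos : ∀ v, 0 < R v) (hR1 : ∀ v, R v ≤ 1)
    (hR0 : Filter.Tendsto R Filter.atTop (nhds 0))
    (hloc : Δ \ S ⊆ ⋃ k, Set.Ico (n k) (2 * n k))
    (hcard : ∀ k, (Nat.card ↥((Δ \ S) ∩ Set.Ico (n k) (2 * n k)) : ℝ) ≤
      R (u k) * (Nat.card ↥(S ∩ Set.Ico 1 (n k)) : ℝ))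
    (hbig : ∀ k, (∑ j ∈ Finset.range k, (Nat.card ↥(S ∩ Set.Ico 1 (n j)) : ℝ)) <
      R (u k) * (Nat.card ↥(S ∩ Set.Ico 1 (n k)) : ℝ))
    (hSpos : ∀ k, 0 < Nat.card ↥(S ∩ Set.Ico 1 (n k))) :
    (∀ k, ∀ N, n k ≤ N → N < n (k + 1) →
      (Nat.card ↥((Δ \ S) ∩ Set.Ico 1 N) : ℝ) ≤
        2 * R (u k) * (Nat.card ↥(S ∩ Set.Ico 1 (n k)) : ℝ)) ∧
    Filter.Tendsto (fun N : ℕ => (Nat.card ↥((Δ \ S) ∩ Set.Ico 1 N) : ℝ) /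
      (Nat.card ↥(S ∩ Set.Ico 1 N) : ℝ)) Filter.atTop (nhds 0) := by
  have hmono : StrictMono n := strictMono_nat_of_lt_succ fun k =>
    lt_of_le_of_lt (by omega) (hn k)
  have hge : ∀ k, n 0 + k ≤ n k := by
    intro k
    induction k with
    | zero => simp
    | succ k ih => have := hn k; omega
  have hfinS : ∀ a b : ℕ, (S ∩ Set.Ico a b).Finite := fun a b =>
    (Set.finite_Ico a b).subset Set.inter_subset_right
  have hfinD : ∀ a b : ℕ, ((Δ \ S) ∩ Set.Ico a b).Finite := fun a b =>
    (Set.finite_Ico a b).subset Set.inter_subset_right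
  have main : ∀ k, ∀ N, n k ≤ N → N < n (k + 1) →
      (Nat.card ↥((Δ \ S) ∩ Set.Ico 1 N) : ℝ) ≤
        2 * R (u k) * (Nat.card ↥(S ∩ Set.Ico 1 (n k)) : ℝ) := by
    intro k N hkN hNk
    have hsub : (Δ \ S) ∩ Set.Ico 1 N ⊆
        ⋃ j ∈ Finset.range (k + 1), ((Δ \ S) ∩ Set.Ico (n j) (2 * n j)) := by
      rintro x ⟨hxD, hx1, hxN⟩
      have hx := hloc hxD
      rw [Set.mem_iUnion] at hx
      obtain ⟨j, hj⟩ := hx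
      have hjk : j < k + 1 := by
        by_contra h
        have h2 : n (k + 1) ≤ n j := hmono.le_iff_le.mpr (by omega)
        have := hj.1
        omega
      exact Set.mem_biUnion (Finset.mem_range.mpr hjk) ⟨hxD, hj⟩
    have h1 : ((Δ \ S) ∩ Set.Ico 1 N).ncard ≤
        ∑ j ∈ Finset.range (k + 1), ((Δ \ S) ∩ Set.Ico (n j) (2 * n j)).ncard := by
      refine le_trans (Set.ncard_le_ncard hsub ?_) (ncard_biUnion_range_le _ (fun j => hfinD _ _) _)
      exact Set.Finite.biUnion (Finset.finite_toSet _) fun j _ => hfinD _ _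
    have h1' : (Nat.card ↥((Δ \ S) ∩ Set.Ico 1 N) : ℝ) ≤
        ∑ j ∈ Finset.range (k + 1), (Nat.card ↥((Δ \ S) ∩ Set.Ico (n j) (2 * n j)) : ℝ) := by
      rw [← Nat.cast_sum]
      exact_mod_cast (by simpa [Nat.card_coe_set_eq] using h1)
    calc (Nat.card ↥((Δ \ S) ∩ Set.Ico 1 N) : ℝ)
        ≤ ∑ j ∈ Finset.range (k + 1),
            (Nat.card ↥((Δ \ S) ∩ Set.Ico (n j) (2 * n j)) : ℝ) := h1'
      _ ≤ ∑ j ∈ Finset.range (k + 1),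
            R (u j) * (Nat.card ↥(S ∩ Set.Ico 1 (n j)) : ℝ) :=
          Finset.sum_le_sum fun j _ => hcard j
      _ = (∑ j ∈ Finset.range k, R (u j) * (Nat.card ↥(S ∩ Set.Ico 1 (n j)) : ℝ))
            + R (u k) * (Nat.card ↥(S ∩ Set.Ico 1 (n k)) : ℝ) := Finset.sum_range_succ _ _
      _ ≤ (∑ j ∈ Finset.range k, (Nat.card ↥(S ∩ Set.Ico 1 (n j)) : ℝ))
            + R (u k) * (Nat.card ↥(S ∩ Set.Ico 1 (n k)) : ℝ) := by
          refine add_le_add_left (Finset.sum_le_sum fun j _ => ?_) _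
          exact mul_le_of_le_one_left (Nat.cast_nonneg _) (hR1 _)
      _ ≤ R (u k) * (Nat.card ↥(S ∩ Set.Ico 1 (n k)) : ℝ)
            + R (u k) * (Nat.card ↥(S ∩ Set.Ico 1 (n k)) : ℝ) :=
          add_le_add_left (le_of_lt (hbig k)) _
      _ = 2 * R (u k) * (Nat.card ↥(S ∩ Set.Ico 1 (n k)) : ℝ) := by ring
  refine ⟨main, ?_⟩
  rw [Metric.tendsto_atTop]
  intro ε hε
  have hRu : Filter.Tendsto (fun k => R (u k)) Filter.atTop (nhds 0) := hR0.comp hu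
  rw [Metric.tendsto_atTop] at hRu
  obtain ⟨k0, hk0⟩ := hRu (ε / 2) (by positivity)
  refine ⟨n k0, fun N hN => ?_⟩
  classical
  set P : ℕ → Prop := fun j => n j ≤ N with hP
  set k := Nat.findGreatest P N with hkdef
  have hk0N : k0 ≤ N := le_trans (le_trans (by omega) (hge k0)) hN
  have hPk0 : P k0 := hN
  have hkN : n k ≤ N := Nat.findGreatest_spec hk0N hPk0
  have hk0k : k0 ≤ k := Nat.le_findGreatest hk0N hPk0
  have hNk1 : N < n (k + 1) := by
    by_contra h
    push_neg at h
    have h2 : k + 1 ≤ N := le_trans (by have := hge (k + 1); omega) h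
    have hP1 : P (k + 1) := le_trans hkN (le_refl N) |>.trans_eq rfl |> fun _ => h
    have := Nat.le_findGreatest h2 hP1
    omega
  have hb := main k N hkN hNk1
  have hle : (Nat.card ↥(S ∩ Set.Ico 1 (n k)) : ℝ) ≤ (Nat.card ↥(S ∩ Set.Ico 1 N) : ℝ) := by
    have hsub2 : S ∩ Set.Ico 1 (n k) ⊆ S ∩ Set.Ico 1 N :=
      Set.inter_subset_inter_right _ (Set.Ico_subset_Ico_right hkN)
    have := Set.ncard_le_ncard hsub2 (hfinS 1 N)
    have h2 : Nat.card ↥(S ∩ Set.Ico 1 (n k)) ≤ Nat.card ↥(S ∩ Set.Ico 1 N) := by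
      rw [Nat.card_coe_set_eq, Nat.card_coe_set_eq]; exact this
    exact_mod_cast h2
  have hB'pos : (0 : ℝ) < (Nat.card ↥(S ∩ Set.Ico 1 (n k)) : ℝ) := by
    exact_mod_cast hSpos k
  have hBpos : (0 : ℝ) < (Nat.card ↥(S ∩ Set.Ico 1 N) : ℝ) := lt_of_lt_of_le hB'pos hle
  have hRk : 2 * R (u k) < ε := by
    have := hk0 k hk0k
    rw [Real.dist_eq, sub_zero, abs_of_pos (hRpos _)] at this
    linarith
  rw [Real.dist_eq, sub_zero, abs_of_nonneg (div_nonneg (Nat.cast_nonneg _) (Nat.cast_nonneg _))]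
  rw [div_lt_iff₀ hBpos]
  have hRnn : (0 : ℝ) ≤ 2 * R (u k) := by linarith [hRpos (u k)]
  nlinarith [mul_le_mul_of_nonneg_left hle hRnn]
end

section
/- Let g: ℕ → ℝ satisfy c u^n < g(u) ≤ C u^n for all u ≥ 1, with constants 0 < c ≤ C and real n > 1, and suppose g(u) ≥ u². Let 1 < p ≤ 2, set α = n/(n-1) and N = g^{-1}(1/(p-1)). Then ∑_{u=1}^∞ u / 2^{g(u)(p-1)} ≤ N^{2α} + A, where A is a constant depending only on g (not on p). In particular, since α ≤ 2, the sum is at most N⁴ + A. -/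
theorem stmt11 (g ginv : ℝ → ℝ) (hg : StrictMono g)
    (n : ℝ) (hn : 1 < n) (c C : ℝ) (hc : 0 < c) (hcC : c ≤ C)
    (hlow : ∀ u : ℝ, 1 ≤ u → c * u ^ n < g u)
    (hup : ∀ u : ℝ, 1 ≤ u → g u ≤ C * u ^ n)
    (hsq : ∀ u : ℝ, 1 ≤ u → u ^ 2 ≤ g u)
    (hginv : ∀ y : ℝ, 1 ≤ y → g (ginv y) = y ∧ 1 ≤ ginv y) :
    ∃ A : ℝ, ∀ p : ℝ, 1 < p → p ≤ 2 →
      (∑' u : ℕ, ((u : ℝ) + 1) / 2 ^ (g ((u : ℝ) + 1) * (p - 1)) ≤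
        ginv (1 / (p - 1)) ^ (2 * (n / (n - 1))) + A) ∧
      (∑' u : ℕ, ((u : ℝ) + 1) / 2 ^ (g ((u : ℝ) + 1) * (p - 1)) ≤
        ginv (1 / (p - 1)) ^ (4 : ℕ) + A) := by
  have hC : 0 < C := hc.trans_le hcC
  have hn1 : (0:ℝ) < n - 1 := by linarith
  -- derive 2 ≤ n from hsq and hup
  have h2n : 2 ≤ n := by
    by_contra h2
    push_neg at h2
    have h2n' : (0:ℝ) < 2 - n := by linarith
    set u : ℝ := (C + 1) ^ ((2 - n)⁻¹) with hu
    have hu1 : (1:ℝ) ≤ u := Real.one_le_rpow (by linarith) (by positivity)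
    have hu0 : (0:ℝ) < u := by linarith
    have h1 : u ^ (2:ℝ) ≤ C * u ^ n := by
      have h := (hsq u hu1).trans (hup u hu1)
      rw [show (2:ℝ) = ((2:ℕ):ℝ) by norm_num, Real.rpow_natCast]
      exact h
    have h3 : u ^ (2 - n) ≤ C := by
      rw [Real.rpow_sub hu0]
      rw [div_le_iff₀ (Real.rpow_pos_of_pos hu0 n)]
      exact h1
    have h4 : u ^ (2 - n) = C + 1 := by
      rw [hu, ← Real.rpow_mul (by linarith : (0:ℝ) ≤ C + 1),
        inv_mul_cancel₀ (ne_of_gt h2n'), Real.rpow_one]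
    linarith
  -- constants
  set K : ℝ := c / C with hK
  have hK0 : 0 < K := div_pos hc hC
  set r : ℝ := (2:ℝ) ^ (-K) with hr
  have hr0 : 0 < r := Real.rpow_pos_of_pos (by norm_num) _
  have hr1 : r < 1 := Real.rpow_lt_one_of_one_lt_of_neg (by norm_num) (by linarith)
  set a : ℕ → ℝ := fun u => ((u:ℝ) + 1) * r ^ u * r with ha_def
  have ha : Summable a := by
    have h1 : Summable (fun u : ℕ => (u:ℝ) * r ^ u) := by
      have := summable_pow_mul_geometric_of_norm_lt_one 1
        (r := r) (by rwa [Real.norm_eq_abs, abs_of_pos hr0])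
      simpa using this
    have h2 : Summable (fun u : ℕ => r ^ u) :=
      summable_geometric_of_lt_one hr0.le hr1
    refine ((h1.add h2).mul_right r).congr (fun u => ?_)
    show ((u:ℝ) * r ^ u + r ^ u) * r = ((u:ℝ) + 1) * r ^ u * r
    ring
  refine ⟨∑' u, a u, fun p hp1 hp2 => ?_⟩
  set t : ℝ := p - 1 with ht_def
  have ht : 0 < t := by simp only [ht_def]; linarith
  have ht1 : t ≤ 1 := by simp only [ht_def]; linarith
  have hy : (1:ℝ) ≤ 1 / t := by
    rw [le_div_iff₀ ht]; linarith
  obtain ⟨hgN, hN1⟩ := hginv (1 / t) hy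
  set N : ℝ := ginv (1 / t) with hN_def
  have hN0 : (0:ℝ) < N := by linarith
  set α : ℝ := n / (n - 1) with hα
  have hα1 : (1:ℝ) ≤ α := by
    rw [hα, le_div_iff₀ hn1]; linarith
  have hα2 : α ≤ 2 := by
    rw [hα, div_le_iff₀ hn1]; linarith
  set Nα : ℝ := N ^ α with hNα
  have hNα1 : (1:ℝ) ≤ Nα := Real.one_le_rpow hN1 (by linarith)
  have hgN0 : 0 < g N := by rw [hgN]; positivity
  have htN : t = (g N)⁻¹ := by
    rw [hgN]; field_simp
  -- pointwise bound
  set f : ℕ → ℝ := fun u => if ((u:ℝ) + 1) ≤ Nα then ((u:ℝ) + 1) else 0 with hf_def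
  have key : ∀ u : ℕ, ((u:ℝ) + 1) / 2 ^ (g ((u:ℝ) + 1) * t) ≤ f u + a u := by
    intro u
    set x : ℝ := (u:ℝ) + 1 with hx_def
    have hx1 : (1:ℝ) ≤ x := by
      have : (0:ℝ) ≤ (u:ℝ) := Nat.cast_nonneg u
      simp only [hx_def]; linarith
    have hx0 : (0:ℝ) < x := by linarith
    have hgx1 : (1:ℝ) ≤ g x := by
      have := hsq x hx1
      nlinarith
    have hgxt : (0:ℝ) ≤ g x * t := by positivity
    have hpow1 : (1:ℝ) ≤ (2:ℝ) ^ (g x * t) :=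
      Real.one_le_rpow (by norm_num) hgxt
    have hau : 0 ≤ a u := by
      have : (0:ℝ) ≤ (u:ℝ) := Nat.cast_nonneg u
      have h1 : (0:ℝ) ≤ r ^ u := pow_nonneg hr0.le u
      simp only [ha_def]
      positivity
    by_cases h : x ≤ Nα
    · have hle : x / 2 ^ (g x * t) ≤ x :=
        div_le_self hx0.le hpow1
      simp only [hf_def]
      rw [if_pos h]
      linarith
    · simp only [hf_def]
      rw [if_neg h, zero_add]
      push_neg at h
      -- tail case : K * x ≤ g x * t
      have hxn : x * N ^ n ≤ x ^ n := by
        have h1 : N ^ n = Nα ^ (n - 1) := by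
          rw [hNα, ← Real.rpow_mul hN0.le]
          congr 1
          rw [hα, div_mul_cancel₀ _ (ne_of_gt hn1)]
        have h2 : Nα ^ (n - 1) ≤ x ^ (n - 1) :=
          Real.rpow_le_rpow (by positivity) h.le (by linarith)
        have h3 : x ^ n = x * x ^ (n - 1) := by
          rw [show n = 1 + (n - 1) by ring, Real.rpow_add hx0, Real.rpow_one]
          ring_nf
        rw [h1, h3]
        have := mul_le_mul_of_nonneg_left h2 hx0.le
        linarith
      have hmain : K * x ≤ g x * t := by
        have hgNle : g N ≤ C * N ^ n := hup N hN1
        have hgxge : c * x ^ n < g x := hlow x hx1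
        have hNn0 : (0:ℝ) < N ^ n := Real.rpow_pos_of_pos hN0 n
        have h4 : K * x ≤ (c * x ^ n) / (C * N ^ n) := by
          rw [hK, div_mul_eq_mul_div, div_le_div_iff₀ hC (by positivity)]
          nlinarith [mul_le_mul_of_nonneg_left hxn (by positivity : (0:ℝ) ≤ c * C)]
        have h5 : (c * x ^ n) / (C * N ^ n) ≤ g x / g N := by
          apply div_le_div₀ (by linarith) hgxge.le hgN0 hgNle
        calc K * x ≤ (c * x ^ n) / (C * N ^ n) := h4
          _ ≤ g x / g N := h5
          _ = g x * t := by rw [htN, div_eq_mul_inv]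
      -- conclude
      have hru : r ^ u * r = (2:ℝ) ^ (-(K * x)) := by
        rw [hr, ← Real.rpow_natCast ((2:ℝ) ^ (-K)) u,
          ← Real.rpow_mul (by norm_num : (0:ℝ) ≤ 2),
          ← Real.rpow_add (by norm_num : (0:ℝ) < 2)]
        congr 1
        rw [hx_def]; push_cast; ring
      have h6 : (2:ℝ) ^ (-(g x * t)) ≤ (2:ℝ) ^ (-(K * x)) :=
        Real.rpow_le_rpow_of_exponent_le (by norm_num) (by linarith)
      calc x / 2 ^ (g x * t) = x * (2:ℝ) ^ (-(g x * t)) := by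
            rw [Real.rpow_neg (by norm_num : (0:ℝ) ≤ 2), div_eq_mul_inv]
        _ ≤ x * (2:ℝ) ^ (-(K * x)) := by
            exact mul_le_mul_of_nonneg_left h6 hx0.le
        _ = x * (r ^ u * r) := by rw [hru]
        _ = a u := by simp only [ha_def, ← hx_def]; ring
  -- summability and sums
  set M : ℕ := ⌊Nα⌋₊ with hM
  have hfsupp : ∀ u ∉ Finset.range M, f u = 0 := by
    intro u hu
    simp only [Finset.mem_range, not_lt] at hu
    simp only [hf_def]
    rw [if_neg]
    intro hle
    have : (((u + 1 : ℕ)):ℝ) ≤ Nα := by push_cast; linarith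
    have h2 : u + 1 ≤ M := Nat.le_floor this
    omega
  have hf_sum : Summable f := summable_of_ne_finset_zero hfsupp
  have hfa_sum : Summable (fun u => f u + a u) := hf_sum.add ha
  have hterm_sum : Summable (fun u : ℕ => ((u:ℝ) + 1) / 2 ^ (g ((u:ℝ) + 1) * t)) := by
    apply Summable.of_nonneg_of_le (fun u => by positivity) key hfa_sum
  have htsumf : ∑' u, f u ≤ Nα * Nα := by
    rw [tsum_eq_sum hfsupp]
    calc ∑ u ∈ Finset.range M, f u ≤ ∑ u ∈ Finset.range M, Nα := by
          apply Finset.sum_le_sum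
          intro u _
          simp only [hf_def]
          split
          · assumption
          · linarith
      _ = (M:ℝ) * Nα := by rw [Finset.sum_const, Finset.card_range, nsmul_eq_mul]
      _ ≤ Nα * Nα := by
          apply mul_le_mul_of_nonneg_right _ (by linarith)
          exact Nat.floor_le (by linarith)
  have hNα2 : Nα * Nα = N ^ (2 * α) := by
    rw [hNα, ← Real.rpow_add hN0]
    congr 1; ring
  have hbound : ∑' u : ℕ, ((u:ℝ) + 1) / 2 ^ (g ((u:ℝ) + 1) * t) ≤ N ^ (2 * α) + ∑' u, a u := by
    calc ∑' u : ℕ, ((u:ℝ) + 1) / 2 ^ (g ((u:ℝ) + 1) * t)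
        ≤ ∑' u, (f u + a u) := Summable.tsum_le_tsum key hterm_sum hfa_sum
      _ = (∑' u, f u) + ∑' u, a u := Summable.tsum_add hf_sum ha
      _ ≤ Nα * Nα + ∑' u, a u := by linarith
      _ = N ^ (2 * α) + ∑' u, a u := by rw [hNα2]
  constructor
  · exact hbound
  · have h7 : N ^ (2 * α) ≤ N ^ (4:ℕ) := by
      rw [← Real.rpow_natCast N 4]
      apply Real.rpow_le_rpow_of_exponent_le hN1
      push_cast; linarith
    linarith
end
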